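/- There is a universal constant C ≥ 1 such that for all unit vectors s₁, s₂ ∈ S¹ ⊂ ℝ², all t₁, t₂ ≥ 0, and the points w₁ = (t₁s₁, 0), w₂ = (t₂s₂, 0) ∈ ℝ³ in the plane {z = 0}, one has C⁻¹ (|t₁ − t₂| + min(t₁,t₂)|s₁ − s₂|^{1/2}) ≤ d_H(w₁, w₂) ≤ C (|t₁ − t₂| + min(t₁,t₂)|s₁ − s₂|^{1/2}), where |s₁ − s₂| is the Euclidean distance in ℝ². -/

import Mathlib

noncomputable section

open Real Set

abbrev E2 := EuclideanSpace ℝ (Fin 2)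
abbrev E3 := EuclideanSpace ℝ (Fin 3)
abbrev E4 := EuclideanSpace ℝ (Fin 4)

/-- The point `(a,b,c)` of `ℝ³`. -/
def mk3 (a b c : ℝ) : E3 := (WithLp.equiv 2 (Fin 3 → ℝ)).symm ![a, b, c]

/-- The Heisenberg distance on `ℝ³`:
`d_H(p,q) = |x−x′| + |y−y′| + |z−z′+(xy′−x′y)/2|^{1/2}`. -/
def dH (p q : E3) : ℝ :=
  |p 0 - q 0| + |p 1 - q 1| + Real.sqrt |p 2 - q 2 + (p 0 * q 1 - q 0 * p 1) / 2|

private lemma le_of_sq_le' (a b : ℝ) (ha : 0 ≤ a) (hb : 0 ≤ b) (h : a^2 ≤ b^2) : a ≤ b := by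
  nlinarith

private lemma abs_le_of_sq' (a b : ℝ) (hb : 0 ≤ b) (h : a^2 ≤ b^2) : |a| ≤ b :=
  le_of_sq_le' _ _ (abs_nonneg a) hb (by rwa [sq_abs])

private lemma sqrt_le_of' (a b : ℝ) (hb : 0 ≤ b) (h : a ≤ b^2) : Real.sqrt a ≤ b :=
  (Real.sqrt_le_sqrt h).trans (le_of_eq (Real.sqrt_sq hb))

private lemma le_sqrt_of' (a b : ℝ) (ha : 0 ≤ a) (h : a^2 ≤ b) : a ≤ Real.sqrt b :=
  (Real.sqrt_sq ha) ▸ Real.sqrt_le_sqrt h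

private lemma coord_bound (t₁ t₂ a₁ a₂ d : ℝ) (ht₁ : 0 ≤ t₁) (ht₂ : 0 ≤ t₂)
    (ha₁ : |a₁| ≤ 1) (ha₂ : |a₂| ≤ 1) (hd : |a₁ - a₂| ≤ d) :
    |t₁*a₁ - t₂*a₂| ≤ |t₁ - t₂| + min t₁ t₂ * d := by
  have hA₁ := abs_nonneg (a₁ - a₂)
  have b1 : |t₁*a₁ - t₂*a₂| ≤ |t₁-t₂| + t₂*d := by
    have e : t₁*a₁ - t₂*a₂ = (t₁-t₂)*a₁ + t₂*(a₁-a₂) := by ring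
    rw [e]
    refine (abs_add_le _ _).trans ?_
    rw [abs_mul, abs_mul, abs_of_nonneg ht₂]
    have h1 : |t₁-t₂| * |a₁| ≤ |t₁-t₂| := by nlinarith [abs_nonneg (t₁-t₂), abs_nonneg a₁]
    have h2 : t₂ * |a₁-a₂| ≤ t₂ * d := by nlinarith
    linarith
  have b2 : |t₁*a₁ - t₂*a₂| ≤ |t₁-t₂| + t₁*d := by
    have e : t₁*a₁ - t₂*a₂ = (t₁-t₂)*a₂ + t₁*(a₁-a₂) := by ring
    rw [e]
    refine (abs_add_le _ _).trans ?_
    rw [abs_mul, abs_mul, abs_of_nonneg ht₁]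
    have h1 : |t₁-t₂| * |a₂| ≤ |t₁-t₂| := by nlinarith [abs_nonneg (t₁-t₂), abs_nonneg a₂]
    have h2 : t₁ * |a₁-a₂| ≤ t₁ * d := by nlinarith
    linarith
  rcases le_total t₁ t₂ with h | h
  · rw [min_eq_left h]; exact b2
  · rw [min_eq_right h]; exact b1

private lemma sqrt_arg_bound (m u D : ℝ) (hm : 0 ≤ m) (hu : 0 ≤ u) (hD : 0 ≤ D) (hD2 : D ≤ 2) :
    (m^2 + m*u)*D^2/2 ≤ (u + m*D)^2 := by
  nlinarith [mul_nonneg (mul_nonneg hu hm) hD, sq_nonneg (m*D), sq_nonneg u,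
    mul_nonneg (mul_nonneg (mul_nonneg hu hm) hD) hD]

private lemma l1_lower (u P Q : ℝ) (hu : 0 ≤ u) (hP : 0 ≤ P) (hQ : 0 ≤ Q)
    (h : u^2 ≤ P^2 + Q^2) : u ≤ P + Q := by
  nlinarith [mul_nonneg hP hQ]

private lemma l1_lower2 (u w P Q : ℝ) (hu : 0 ≤ u) (hw : 0 ≤ w) (hP : 0 ≤ P) (hQ : 0 ≤ Q)
    (h : u^2 + w^2 ≤ P^2 + Q^2) : u + w ≤ 2*(P + Q) := by
  nlinarith [mul_nonneg hP hQ, sq_nonneg (u - w)]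

/-- There is a universal constant `C ≥ 1` such that for all unit vectors
`s₁, s₂ ∈ S¹ ⊂ ℝ²`, all `t₁, t₂ ≥ 0`, and `w₁ = (t₁s₁, 0)`, `w₂ = (t₂s₂, 0)` in the plane
`{z = 0}`:
`C⁻¹ (|t₁−t₂| + min(t₁,t₂)|s₁−s₂|^{1/2}) ≤ d_H(w₁,w₂) ≤ C (|t₁−t₂| + min(t₁,t₂)|s₁−s₂|^{1/2})`. -/
theorem dH_plane_z_eq_zero_polar :
    ∃ C : ℝ, 1 ≤ C ∧
      ∀ (s₁ s₂ : E2), ‖s₁‖ = 1 → ‖s₂‖ = 1 →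
        ∀ (t₁ t₂ : ℝ), 0 ≤ t₁ → 0 ≤ t₂ →
          C⁻¹ * (|t₁ - t₂| + min t₁ t₂ * Real.sqrt ‖s₁ - s₂‖) ≤
              dH (mk3 (t₁ * s₁ 0) (t₁ * s₁ 1) 0) (mk3 (t₂ * s₂ 0) (t₂ * s₂ 1) 0) ∧
            dH (mk3 (t₁ * s₁ 0) (t₁ * s₁ 1) 0) (mk3 (t₂ * s₂ 0) (t₂ * s₂ 1) 0) ≤
              C * (|t₁ - t₂| + min t₁ t₂ * Real.sqrt ‖s₁ - s₂‖) := by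
  refine ⟨10, by norm_num, ?_⟩
  intro s₁ s₂ hn1 hn2 t₁ t₂ ht₁ ht₂
  set x1 := s₁ 0 with hx1def
  set y1 := s₁ 1 with hy1def
  set x2 := s₂ 0 with hx2def
  set y2 := s₂ 1 with hy2def
  -- basic facts about the unit vectors
  have h1 : x1^2 + y1^2 = 1 := by
    have h2' : Real.sqrt (x1^2 + y1^2) = 1 := by
      rw [← hn1, EuclideanSpace.norm_eq]
      simp [Fin.sum_univ_two, sq_abs, hx1def, hy1def]
    nlinarith only [Real.sq_sqrt (show (0:ℝ) ≤ x1^2 + y1^2 by positivity), h2']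
  have h2 : x2^2 + y2^2 = 1 := by
    have h2' : Real.sqrt (x2^2 + y2^2) = 1 := by
      rw [← hn2, EuclideanSpace.norm_eq]
      simp [Fin.sum_univ_two, sq_abs, hx2def, hy2def]
    nlinarith only [Real.sq_sqrt (show (0:ℝ) ≤ x2^2 + y2^2 by positivity), h2']
  set d := ‖s₁ - s₂‖ with hddef
  have hd0 : 0 ≤ d := norm_nonneg _
  have hd2 : d^2 = (x1 - x2)^2 + (y1 - y2)^2 := by
    rw [hddef, EuclideanSpace.norm_eq, Real.sq_sqrt (by positivity)]
    simp [Fin.sum_univ_two, sq_abs, hx1def, hy1def, hx2def, hy2def]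
  have hdot : x1*x2 + y1*y2 = 1 - d^2/2 := by linear_combination (1/2)*hd2 + (1/2)*h1 + (1/2)*h2
  have hd_le2 : d ≤ 2 := by
    nlinarith only [sq_nonneg (x1+x2), sq_nonneg (y1+y2), hd2, h1, h2, hd0]
  set D := Real.sqrt d with hDdef
  have hD0 : 0 ≤ D := Real.sqrt_nonneg _
  have hDD : D^2 = d := Real.sq_sqrt hd0
  have hD_le2 : D ≤ 2 := le_of_sq_le' _ _ hD0 (by norm_num) (by rw [hDD]; linarith)
  set u := |t₁ - t₂| with hudef
  have hu0 : 0 ≤ u := abs_nonneg _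
  have hu2 : u^2 = (t₁-t₂)^2 := sq_abs _
  set m := min t₁ t₂ with hmdef
  have hm0 : 0 ≤ m := le_min ht₁ ht₂
  have hmu : t₁ * t₂ = m^2 + m*u := by
    have h1' : m * max t₁ t₂ = t₁ * t₂ := min_mul_max t₁ t₂
    have h2' : max t₁ t₂ - m = u := by
      rw [hudef, abs_sub_comm]; exact max_sub_min_eq_abs t₁ t₂
    linear_combination (-1 : ℝ) * h1' + m * h2'
  set K := |x1*y2 - x2*y1| with hKdef
  have hK0 : 0 ≤ K := abs_nonneg _
  have hcross : (x1*y2 - x2*y1)^2 = 1 - (x1*x2 + y1*y2)^2 := by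
    linear_combination (x2^2+y2^2) * h1 + h2
  have hK2 : K^2 = d^2*(4-d^2)/4 := by
    rw [hKdef, sq_abs, hcross, hdot]; ring
  have hKd : K ≤ d := le_of_sq_le' _ _ hK0 hd0 (by nlinarith only [hK2, sq_nonneg (d*d)])
  -- the dH expression
  have harg : |(t₁ * x1) * (t₂ * y2) - (t₂ * x2) * (t₁ * y1)| = t₁*t₂*K := by
    rw [show (t₁ * x1) * (t₂ * y2) - (t₂ * x2) * (t₁ * y1)
          = t₁*t₂*(x1*y2 - x2*y1) by ring, abs_mul, abs_of_nonneg (mul_nonneg ht₁ ht₂)]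
  have hdH : dH (mk3 (t₁ * s₁ 0) (t₁ * s₁ 1) 0) (mk3 (t₂ * s₂ 0) (t₂ * s₂ 1) 0)
      = |t₁*x1 - t₂*x2| + |t₁*y1 - t₂*y2| + Real.sqrt (t₁*t₂*K/2) := by
    simp only [dH, mk3, ← hx1def, ← hy1def, ← hx2def, ← hy2def]
    norm_num [Matrix.cons_val_zero, Matrix.cons_val_one]
    simp only [Matrix.cons_val_two, Matrix.tail_cons, Matrix.head_cons, sub_self, zero_add]
    rw [abs_div, harg]
    norm_num
  set X := t₁*x1 - t₂*x2 with hXdef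
  set Y := t₁*y1 - t₂*y2 with hYdef
  set S := Real.sqrt (t₁*t₂*K/2) with hSdef
  have hS0 : 0 ≤ S := Real.sqrt_nonneg _
  -- key identity
  have hXY : X^2 + Y^2 = (t₁-t₂)^2 + t₁*t₂*d^2 := by
    rw [hXdef, hYdef]
    linear_combination t₁^2*h1 + t₂^2*h2 - 2*t₁*t₂*hdot
  -- coordinate bounds for the upper estimate
  have habs1 : |x1| ≤ 1 := abs_le_of_sq' _ _ (by norm_num) (by nlinarith only [h1, sq_nonneg y1])
  have habs2 : |x2| ≤ 1 := abs_le_of_sq' _ _ (by norm_num) (by nlinarith only [h2, sq_nonneg y2])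
  have habs3 : |y1| ≤ 1 := abs_le_of_sq' _ _ (by norm_num) (by nlinarith only [h1, sq_nonneg x1])
  have habs4 : |y2| ≤ 1 := abs_le_of_sq' _ _ (by norm_num) (by nlinarith only [h2, sq_nonneg x2])
  have habsx : |x1 - x2| ≤ d := abs_le_of_sq' _ _ hd0 (by nlinarith only [hd2, sq_nonneg (y1-y2)])
  have habsy : |y1 - y2| ≤ d := abs_le_of_sq' _ _ hd0 (by nlinarith only [hd2, sq_nonneg (x1-x2)])
  have hXb : |X| ≤ u + m*d := coord_bound t₁ t₂ x1 x2 d ht₁ ht₂ habs1 habs2 habsx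
  have hYb : |Y| ≤ u + m*d := coord_bound t₁ t₂ y1 y2 d ht₁ ht₂ habs3 habs4 habsy
  have hd_le_2D : d ≤ 2*D := by
    nlinarith only [mul_nonneg hD0 (sub_nonneg.mpr hD_le2), hDD]
  -- upper bound for S
  have hSb : S ≤ u + m*D := by
    refine sqrt_le_of' _ _ (by positivity) ?_
    have h1' : t₁*t₂*K/2 ≤ (m^2 + m*u)*d/2 := by
      rw [hmu]
      have hnn : 0 ≤ m^2 + m*u := by positivity
      nlinarith only [mul_nonneg hnn (sub_nonneg.mpr hKd)]
    have h2' : (m^2 + m*u)*d/2 ≤ (u + m*D)^2 := by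
      have := sqrt_arg_bound m u D hm0 hu0 hD0 hD_le2
      rw [hDD] at this; linarith
    linarith
  constructor
  · -- lower bound
    rw [hdH]
    have key : u + m*D ≤ 2*((|X| + |Y|) + S) := by
      rcases le_total d 1 with hcase | hcase
      · -- small angle: use the sqrt term
        have hLu : u ≤ |X| + |Y| := by
          refine l1_lower u (|X|) (|Y|) hu0 (abs_nonneg X) (abs_nonneg Y) ?_
          rw [sq_abs X, sq_abs Y, hXY, ← hu2]
          nlinarith only [mul_nonneg (mul_nonneg ht₁ ht₂) (sq_nonneg d)]
        have hd1 : d^2 ≤ 1 := by nlinarith only [hd0, hcase]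
        have hKge : d/2 ≤ K :=
          le_of_sq_le' _ _ (by linarith) hK0 (by nlinarith only [hK2, hd1, sq_nonneg d])
        have hSge : m*D/2 ≤ S := by
          refine le_sqrt_of' _ _ (by positivity) ?_
          have e : (m*D/2)^2 = m^2*d/4 := by
            rw [show (m*D/2)^2 = m^2*D^2/4 from by ring, hDD]
          have hm2le : m^2 ≤ t₁*t₂ := by nlinarith only [hmu, mul_nonneg hm0 hu0]
          rw [e]
          nlinarith only [mul_nonneg (sub_nonneg.mpr hm2le) hK0,
            mul_nonneg (sq_nonneg m) (sub_nonneg.mpr hKge)]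
        linarith
      · -- large angle: the horizontal part dominates
        have hD1 : 1 ≤ D := by nlinarith only [hDD, hcase, hD0]
        have hDd : D ≤ d := by
          nlinarith only [mul_nonneg hD0 (sub_nonneg.mpr hD1), hDD]
        have hL : u + m*d ≤ 2*(|X| + |Y|) := by
          refine l1_lower2 u (m*d) (|X|) (|Y|) hu0 (mul_nonneg hm0 hd0)
            (abs_nonneg X) (abs_nonneg Y) ?_
          rw [sq_abs X, sq_abs Y, hXY, ← hu2]
          have hm2le : m^2 ≤ t₁*t₂ := by nlinarith only [hmu, mul_nonneg hm0 hu0]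
          nlinarith only [mul_nonneg (sub_nonneg.mpr hm2le) (sq_nonneg d)]
        have hmDd : m*D ≤ m*d := mul_le_mul_of_nonneg_left hDd hm0
        linarith
    have hdHnn : 0 ≤ (|X| + |Y|) + S := by positivity
    rw [show ((10:ℝ))⁻¹ = 1/10 by norm_num]
    linarith
  · -- upper bound
    rw [hdH]
    have hAnn : 0 ≤ u + m*D := by positivity
    have hmd : m*d ≤ 2*(m*D) := by
      nlinarith only [mul_le_mul_of_nonneg_left hd_le_2D hm0]
    linarith
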